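/- arXiv:2001.02712 — 5 statements merged into one kernel-verified Lean document; each statement's English description precedes it below -/
import Mathlib

section
/- Let α ∈ ℝⁿ with all αᵢ ≠ 0 and |α₁| > Σ_{i=2}^n |αᵢ| (α is dominant). Define the symmetric matrix M by M_{ij} = αᵢαⱼ for i ≠ j, M₁₁ = |α₁|·(Σ_{i≥2}|αᵢ|), and M_{ii} = |αᵢ|·(|α₁| − Σ_{j≠i,j≠1}|αⱼ|) for i ≥ 2. Then the rows of M satisfy the linear dependence M_{1,*} = Σ_{g=2}^n γ₁γ_g M_{g,*}, where γᵢ = sign(αᵢ); in particular M is singular (rank at most n−1). -/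
open Finset

theorem stmt_1 {n : ℕ} (α : Fin (n + 1) → ℝ)
    (M : Matrix (Fin (n + 1)) (Fin (n + 1)) ℝ)
    (hα : ∀ i, α i ≠ 0)
    (hdom : ∑ i ∈ Finset.univ.erase 0, |α i| < |α 0|)
    (hoff : ∀ i j, i ≠ j → M i j = α i * α j)
    (h11 : M 0 0 = |α 0| * ∑ i ∈ Finset.univ.erase 0, |α i|)
    (hdiag : ∀ i, i ≠ 0 →
      M i i = |α i| * (|α 0| - ∑ j ∈ (Finset.univ.erase 0).erase i, |α j|)) :
    (∀ j, M 0 j = ∑ g ∈ Finset.univ.erase 0,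
        Real.sign (α 0) * Real.sign (α g) * M g j) ∧ M.det = 0 := by
  have hs : ∀ i, Real.sign (α i) * α i = |α i| := by
    intro i
    rcases (hα i).lt_or_gt with h | h
    · rw [Real.sign_of_neg h, abs_of_neg h]; ring
    · rw [Real.sign_of_pos h, abs_of_pos h]; ring
  have hs' : ∀ i, Real.sign (α i) * |α i| = α i := by
    intro i
    rcases (hα i).lt_or_gt with h | h
    · rw [Real.sign_of_neg h, abs_of_neg h]; ring
    · rw [Real.sign_of_pos h, abs_of_pos h]; ring
  have key : ∀ j, M 0 j = ∑ g ∈ Finset.univ.erase 0,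
      Real.sign (α 0) * Real.sign (α g) * M g j := by
    intro j
    by_cases hj : j = 0
    · subst hj
      rw [h11]
      rw [Finset.mul_sum]
      refine Finset.sum_congr rfl fun g hg => ?_
      have hg0 : g ≠ 0 := Finset.ne_of_mem_erase hg
      rw [hoff g 0 hg0]
      rw [← hs g, ← hs 0]; ring
    · have hjmem : j ∈ Finset.univ.erase (0 : Fin (n+1)) :=
        Finset.mem_erase.2 ⟨hj, Finset.mem_univ j⟩
      rw [← Finset.add_sum_erase _ _ hjmem]
      rw [hdiag j hj]
      have hrest : ∑ g ∈ (Finset.univ.erase 0).erase j,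
          Real.sign (α 0) * Real.sign (α g) * M g j
          = Real.sign (α 0) * α j * ∑ g ∈ (Finset.univ.erase 0).erase j, |α g| := by
        rw [Finset.mul_sum]
        refine Finset.sum_congr rfl fun g hg => ?_
        have hgj : g ≠ j := Finset.ne_of_mem_erase hg
        rw [hoff g j hgj]
        rw [← hs g]; ring
      rw [hrest, hoff 0 j (Ne.symm hj)]
      have h1 : Real.sign (α 0) * Real.sign (α j) * (|α j| *
          (|α 0| - ∑ g ∈ (Finset.univ.erase 0).erase j, |α g|))
          = Real.sign (α 0) * α j * (|α 0| - ∑ g ∈ (Finset.univ.erase 0).erase j, |α g|) := by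
        linear_combination (Real.sign (α 0) * (|α 0| - ∑ g ∈ (Finset.univ.erase 0).erase j, |α g|)) * hs' j
      rw [h1]
      linear_combination (-α j) * hs' 0
  refine ⟨key, ?_⟩
  rw [← Matrix.exists_vecMul_eq_zero_iff]
  refine ⟨fun i => if i = 0 then 1 else -(Real.sign (α 0) * Real.sign (α i)), ?_, ?_⟩
  · intro h
    have := congrFun h 0
    simp at this
  · funext j
    have := key j
    simp only [Matrix.vecMul, dotProduct]
    rw [show (0 : Fin (n+1) → ℝ) j = 0 from rfl]
    rw [← Finset.add_sum_erase _ _ (Finset.mem_univ (0 : Fin (n+1)))]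
    simp only [if_pos rfl, one_mul]
    have : ∑ i ∈ Finset.univ.erase (0 : Fin (n+1)),
        (if i = 0 then (1:ℝ) else -(Real.sign (α 0) * Real.sign (α i))) * M i j
        = -∑ g ∈ Finset.univ.erase 0, Real.sign (α 0) * Real.sign (α g) * M g j := by
      rw [← Finset.sum_neg_distrib]
      refine Finset.sum_congr rfl fun i hi => ?_
      rw [if_neg (Finset.ne_of_mem_erase hi)]; ring
    rw [this, ← key j]
    simp
end

section
/- Let α ∈ ℝⁿ with all αᵢ ≠ 0, and define M by M_{ij} = αᵢαⱼ for i≠j, M₁₁ = |α₁|·(Σ_{i≥2}|αᵢ|), M_{ii} = |αᵢ|·(|α₁| − Σ_{j≠i,1}|αⱼ|) for i ≥ 2. Define Φ ∈ ℝⁿ by Φ₁ = 1 and Φᵢ = −sign(α₁αᵢ) for i ≥ 2. Then MΦ = 0. -/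
open Finset

theorem stmt_2 {n : ℕ} (α : Fin (n + 1) → ℝ)
    (M : Matrix (Fin (n + 1)) (Fin (n + 1)) ℝ)
    (Φ : Fin (n + 1) → ℝ)
    (hα : ∀ i, α i ≠ 0)
    (hoff : ∀ i j, i ≠ j → M i j = α i * α j)
    (h11 : M 0 0 = |α 0| * ∑ i ∈ Finset.univ.erase 0, |α i|)
    (hdiag : ∀ i, i ≠ 0 →
      M i i = |α i| * (|α 0| - ∑ j ∈ (Finset.univ.erase 0).erase i, |α j|))
    (hΦ0 : Φ 0 = 1)
    (hΦ : ∀ i, i ≠ 0 → Φ i = -Real.sign (α 0 * α i)) :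
    M.mulVec Φ = 0 := by
  have key1 : ∀ x : ℝ, x ≠ 0 → Real.sign (α 0 * x) * x = Real.sign (α 0) * |x| := by
    intro x hx
    rcases (hα 0).lt_or_gt with h0 | h0 <;> rcases hx.lt_or_gt with h | h
    · rw [Real.sign_of_pos (mul_pos_of_neg_of_neg h0 h), Real.sign_of_neg h0, abs_of_neg h]; ring
    · rw [Real.sign_of_neg (mul_neg_of_neg_of_pos h0 h), Real.sign_of_neg h0, abs_of_pos h]
    · rw [Real.sign_of_neg (mul_neg_of_pos_of_neg h0 h), Real.sign_of_pos h0, abs_of_neg h]; ring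
    · rw [Real.sign_of_pos (mul_pos h0 h), Real.sign_of_pos h0, abs_of_pos h]
  have key2 : ∀ x : ℝ, x ≠ 0 → Real.sign (α 0 * x) * |x| = Real.sign (α 0) * x := by
    intro x hx
    rcases (hα 0).lt_or_gt with h0 | h0 <;> rcases hx.lt_or_gt with h | h
    · rw [Real.sign_of_pos (mul_pos_of_neg_of_neg h0 h), Real.sign_of_neg h0, abs_of_neg h]; ring
    · rw [Real.sign_of_neg (mul_neg_of_neg_of_pos h0 h), Real.sign_of_neg h0, abs_of_pos h]
    · rw [Real.sign_of_neg (mul_neg_of_pos_of_neg h0 h), Real.sign_of_pos h0, abs_of_neg h]; ring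
    · rw [Real.sign_of_pos (mul_pos h0 h), Real.sign_of_pos h0, abs_of_pos h]
  set s := Real.sign (α 0) with hsdef
  have hs0 : s * |α 0| = α 0 := by
    rcases (hα 0).lt_or_gt with h0 | h0
    · rw [hsdef, Real.sign_of_neg h0, abs_of_neg h0]; ring
    · rw [hsdef, Real.sign_of_pos h0, abs_of_pos h0]; ring
  have hs1 : s * α 0 = |α 0| := by
    rcases (hα 0).lt_or_gt with h0 | h0
    · rw [hsdef, Real.sign_of_neg h0, abs_of_neg h0]; ring
    · rw [hsdef, Real.sign_of_pos h0, abs_of_pos h0]; ring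
  funext i
  simp only [Matrix.mulVec, dotProduct, Pi.zero_apply]
  by_cases hi : i = 0
  · subst hi
    rw [← Finset.add_sum_erase _ _ (Finset.mem_univ (0 : Fin (n + 1)))]
    have h2 : ∀ j ∈ Finset.univ.erase (0 : Fin (n + 1)),
        M 0 j * Φ j = |α 0| * -|α j| := by
      intro j hj
      have hj0 : j ≠ 0 := Finset.ne_of_mem_erase hj
      rw [hoff 0 j (Ne.symm hj0), hΦ j hj0]
      linear_combination (-(α 0)) * key1 (α j) (hα j) - |α j| * hs1
    rw [Finset.sum_congr rfl h2, h11, hΦ0, ← Finset.mul_sum, Finset.sum_neg_distrib]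
    ring
  · have h0i : (0 : Fin (n + 1)) ≠ i := Ne.symm hi
    rw [← Finset.add_sum_erase _ _ (Finset.mem_univ i),
        ← Finset.add_sum_erase _ _ (Finset.mem_erase.mpr ⟨h0i, Finset.mem_univ 0⟩),
        Finset.erase_right_comm]
    have hterm : ∀ j ∈ (Finset.univ.erase (0 : Fin (n + 1))).erase i,
        M i j * Φ j = -(s * α i) * |α j| := by
      intro j hj
      have hji : j ≠ i := Finset.ne_of_mem_erase hj
      have hj0 : j ≠ 0 := Finset.ne_of_mem_erase (Finset.mem_of_mem_erase hj)
      rw [hoff i j (Ne.symm hji), hΦ j hj0]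
      linear_combination (-(α i)) * key1 (α j) (hα j)
    rw [Finset.sum_congr rfl hterm, ← Finset.mul_sum, hoff i 0 hi, hΦ0,
        hdiag i hi, hΦ i hi]
    have hk := key2 (α i) (hα i)
    set S := ∑ j ∈ (Finset.univ.erase (0 : Fin (n + 1))).erase i, |α j| with hS
    linear_combination (-(|α 0| - S)) * hk + (-(α i)) * hs0
end

section
/- Let α ∈ ℝⁿ with 0 < |αᵢ| < 1 and suppose α is dominant: |α₁| > Σ_{i=2}^n |αᵢ|. Then Tr_ND − Tr_DM = |α₁|·(|α₁| − 2S) + S² = (|α₁| − S)² > 0, where S = Σ_{i=2}^n |αᵢ|; i.e., the dominant-case solution has strictly smaller trace than the rank-1 solution. -/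
open Finset

theorem stmt_6 {n : ℕ} (α : Fin (n + 1) → ℝ)
    (hα : ∀ i, 0 < |α i| ∧ |α i| < 1)
    (hdom : ∑ i ∈ Finset.univ.erase 0, |α i| < |α 0|) :
    (∑ i, (α i) ^ 2) -
        (|α 0| * (∑ i ∈ Finset.univ.erase 0, |α i|) +
          ∑ i ∈ Finset.univ.erase 0,
            |α i| * (|α 0| - ∑ j ∈ (Finset.univ.erase 0).erase i, |α j|)) =
      |α 0| * (|α 0| - 2 * ∑ i ∈ Finset.univ.erase 0, |α i|) +
        (∑ i ∈ Finset.univ.erase 0, |α i|) ^ 2 ∧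
    (∑ i, (α i) ^ 2) -
        (|α 0| * (∑ i ∈ Finset.univ.erase 0, |α i|) +
          ∑ i ∈ Finset.univ.erase 0,
            |α i| * (|α 0| - ∑ j ∈ (Finset.univ.erase 0).erase i, |α j|)) =
      (|α 0| - ∑ i ∈ Finset.univ.erase 0, |α i|) ^ 2 ∧
    0 < (∑ i, (α i) ^ 2) -
        (|α 0| * (∑ i ∈ Finset.univ.erase 0, |α i|) +
          ∑ i ∈ Finset.univ.erase 0,
            |α i| * (|α 0| - ∑ j ∈ (Finset.univ.erase 0).erase i, |α j|)) := by
  set S : ℝ := ∑ i ∈ Finset.univ.erase 0, |α i| with hS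
  have htot : (∑ i, (α i) ^ 2) = (α 0) ^ 2 + ∑ i ∈ Finset.univ.erase 0, (α i) ^ 2 := by
    rw [← Finset.add_sum_erase _ _ (Finset.mem_univ (0 : Fin (n + 1)))]
  have hinner : ∀ i ∈ Finset.univ.erase (0 : Fin (n + 1)),
      |α i| * (|α 0| - ∑ j ∈ (Finset.univ.erase 0).erase i, |α j|)
        = |α i| * |α 0| - |α i| * S + (α i) ^ 2 := by
    intro i hi
    rw [Finset.sum_erase_eq_sub hi, ← hS, ← sq_abs (α i)]
    ring
  have hsum : ∑ i ∈ Finset.univ.erase 0,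
      |α i| * (|α 0| - ∑ j ∈ (Finset.univ.erase 0).erase i, |α j|)
        = S * |α 0| - S * S + ∑ i ∈ Finset.univ.erase 0, (α i) ^ 2 := by
    rw [Finset.sum_congr rfl hinner, Finset.sum_add_distrib, Finset.sum_sub_distrib,
      ← Finset.sum_mul, ← Finset.sum_mul, ← hS]
  have key : (∑ i, (α i) ^ 2) -
      (|α 0| * S + ∑ i ∈ Finset.univ.erase 0,
        |α i| * (|α 0| - ∑ j ∈ (Finset.univ.erase 0).erase i, |α j|))
      = (|α 0| - S) ^ 2 := by
    rw [htot, hsum, ← sq_abs (α 0)]; ring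
  refine ⟨?_, ?_, ?_⟩
  · rw [key]; ring
  · exact key
  · rw [key]; exact pow_pos (sub_pos.2 hdom) 2
end

section
/- Let α ∈ ℝⁿ with all αᵢ ≠ 0 and α dominant (|α₁| > Σ_{i≥2}|αᵢ|). Define M = Σ_{t,DM} by M_{ij} = αᵢαⱼ (i≠j), M₁₁ = |α₁|Σ_{i≥2}|αᵢ|, M_{ii} = |αᵢ|(|α₁| − Σ_{j≠i,1}|αⱼ|) for i≥2. Then all diagonal entries of D := Σ_x − M, where Σ_x has unit diagonal and off-diagonal entries αᵢαⱼ, are strictly positive, i.e., M_{ii} < 1 for all i, provided additionally 0 < |αᵢ| < 1 for all i. -/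
open Finset

theorem stmt_7 {n : ℕ} (α : Fin (n + 1) → ℝ)
    (M : Matrix (Fin (n + 1)) (Fin (n + 1)) ℝ)
    (hα : ∀ i, 0 < |α i| ∧ |α i| < 1)
    (hdom : ∑ i ∈ Finset.univ.erase 0, |α i| < |α 0|)
    (hoff : ∀ i j, i ≠ j → M i j = α i * α j)
    (h11 : M 0 0 = |α 0| * ∑ i ∈ Finset.univ.erase 0, |α i|)
    (hdiag : ∀ i, i ≠ 0 →
      M i i = |α i| * (|α 0| - ∑ j ∈ (Finset.univ.erase 0).erase i, |α j|)) :
    ∀ i, 0 < 1 - M i i := by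
  intro i
  have hS : (0:ℝ) ≤ ∑ i ∈ Finset.univ.erase 0, |α i| :=
    Finset.sum_nonneg fun j _ => abs_nonneg _
  by_cases hi : i = 0
  · subst hi
    rw [h11]
    nlinarith [(hα 0).1, (hα 0).2]
  · rw [hdiag i hi]
    have hS' : (0:ℝ) ≤ ∑ j ∈ (Finset.univ.erase 0).erase i, |α j| :=
      Finset.sum_nonneg fun j _ => abs_nonneg _
    nlinarith [(hα i).1, (hα i).2, (hα 0).1, (hα 0).2]
end

section
/- Let α ∈ ℝⁿ with all αᵢ ≠ 0. Define M by M_{ij} = αᵢαⱼ for i≠j, M₁₁ = |α₁|Σ_{i≥2}|αᵢ|, and M_{ii} = |αᵢ|(|α₁| − Σ_{j≠i,1}|αⱼ|) for i≥2. If α is dominant (|α₁| > Σ_{i≥2}|αᵢ|), then M is positive semidefinite of rank exactly n−1. -/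
open Finset

set_option maxHeartbeats 1000000 in
theorem stmt_8 {n : ℕ} (α : Fin (n + 1) → ℝ)
    (M : Matrix (Fin (n + 1)) (Fin (n + 1)) ℝ)
    (hα : ∀ i, α i ≠ 0)
    (hdom : ∑ i ∈ Finset.univ.erase 0, |α i| < |α 0|)
    (hoff : ∀ i j, i ≠ j → M i j = α i * α j)
    (h11 : M 0 0 = |α 0| * ∑ i ∈ Finset.univ.erase 0, |α i|)
    (hdiag : ∀ i, i ≠ 0 →
      M i i = |α i| * (|α 0| - ∑ j ∈ (Finset.univ.erase 0).erase i, |α j|)) :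
    M.PosSemidef ∧ M.rank = n := by
  classical
  set E : Finset (Fin (n+1)) := Finset.univ.erase 0 with hE
  set S : ℝ := ∑ i ∈ E, |α i| with hS
  set d : Fin (n+1) → ℝ := fun i => if i = 0 then |α 0| * S - α 0 * α 0 else |α i| * (|α 0| - S) with hd
  set A : Matrix (Fin (n+1)) (Fin (n+1)) ℝ := Matrix.of (fun i j => α i * α j) with hA
  have hSsub : ∀ i ∈ E, ∑ j ∈ E.erase i, |α j| = S - |α i| := by
    intro i hi
    have h := Finset.add_sum_erase E (fun j => |α j|) hi
    rw [← hS] at h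
    linarith
  have hM : M = A + Matrix.diagonal d := by
    ext i j
    by_cases hij : i = j
    · subst hij
      by_cases h0 : i = 0
      · subst h0
        simp only [Matrix.add_apply, Matrix.diagonal_apply_eq, hd, hA,
          Matrix.of_apply, h11, if_true, eq_self_iff_true]
        ring
      · have hiE : i ∈ E := by simp [hE, h0]
        simp only [Matrix.add_apply, Matrix.diagonal_apply_eq, hd, hA,
          Matrix.of_apply, hdiag i h0, hSsub i hiE, if_neg h0]
        have h2 : α i * α i = |α i| * |α i| := (abs_mul_abs_self _).symm
        nlinarith [h2]
    · simp [Matrix.add_apply, Matrix.diagonal_apply_ne _ hij, hA, hoff i j hij]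
  have hsplit : ∀ f : Fin (n+1) → ℝ, ∑ i, f i = f 0 + ∑ i ∈ E, f i := by
    intro f; rw [hE]; exact (Finset.add_sum_erase _ f (Finset.mem_univ 0)).symm
  have hQ : ∀ x : Fin (n+1) → ℝ, dotProduct x (M.mulVec x) =
      (α 0 * x 0 + ∑ i ∈ E, α i * x i)^2 + (|α 0| * S - α 0 * α 0) * x 0 ^ 2
      + (|α 0| - S) * ∑ i ∈ E, |α i| * x i ^ 2 := by
    intro x
    rw [hM, Matrix.add_mulVec, dotProduct_add]
    have hA' : dotProduct x (A.mulVec x) = (∑ i, α i * x i)^2 := by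
      simp only [dotProduct, Matrix.mulVec, hA, Matrix.of_apply, Finset.mul_sum, sq,
        Finset.sum_mul_sum]
      apply Finset.sum_congr rfl; intros
      rw [Finset.sum_mul]
      apply Finset.sum_congr rfl; intros; ring
    have hD' : dotProduct x ((Matrix.diagonal d).mulVec x) = ∑ i, d i * x i ^ 2 := by
      simp only [dotProduct, Matrix.mulVec_diagonal]
      apply Finset.sum_congr rfl; intros; ring
    rw [hA', hD', hsplit (fun i => α i * x i), hsplit (fun i => d i * x i ^ 2)]
    have hde : ∑ i ∈ E, d i * x i ^ 2 = (|α 0| - S) * ∑ i ∈ E, |α i| * x i ^ 2 := by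
      rw [Finset.mul_sum]
      apply Finset.sum_congr rfl
      intro i hi
      have h0 : i ≠ 0 := (Finset.mem_erase.mp (hE ▸ hi)).1
      simp only [hd, if_neg h0]; ring
    rw [hde]
    simp only [hd, if_pos rfl]
    ring
  set s : Fin (n+1) → ℝ := fun i => Real.sign (α i) with hsdef
  have hs2 : ∀ i, s i * s i = 1 := by
    intro i
    rcases Real.sign_apply_eq_of_ne_zero (α i) (hα i) with h | h <;> simp [hsdef, h]
  have hs1 : ∀ i, s i * |α i| = α i := by
    intro i
    rcases (hα i).lt_or_gt with h | h
    · rw [hsdef]; simp [Real.sign_of_neg h, abs_of_neg h]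
    · rw [hsdef]; simp [Real.sign_of_pos h, abs_of_pos h]
  have habs : ∀ i, (0:ℝ) < |α i| := fun i => abs_pos.2 (hα i)
  have hDS : ∀ x : Fin (n+1) → ℝ,
      ∑ i ∈ E, ∑ j ∈ E, |α i| * |α j| * (s i * x i - s j * x j)^2
      = 2 * (S * (∑ i ∈ E, |α i| * x i ^ 2) - (∑ i ∈ E, α i * x i)^2) := by
    intro x
    have term : ∀ i ∈ E, ∀ j ∈ E, |α i| * |α j| * (s i * x i - s j * x j)^2
        = |α i| * x i ^ 2 * |α j| + |α i| * (|α j| * x j ^ 2)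
          - 2 * ((α i * x i) * (α j * x j)) := by
      intro i _ j _
      linear_combination (|α i| * |α j| * (x i)^2) * hs2 i + (|α i| * |α j| * (x j)^2) * hs2 j
        - (2 * x i * x j * α j) * hs1 i - (2 * x i * x j * (s i * |α i|)) * hs1 j
    rw [Finset.sum_congr rfl (fun i hi => Finset.sum_congr rfl (fun j hj => term i hi j hj))]
    simp only [Finset.sum_add_distrib, Finset.sum_sub_distrib, ← Finset.sum_mul,
      ← Finset.mul_sum, ← hS]
    ring
  have hQ' : ∀ x : Fin (n+1) → ℝ, S * dotProduct x (M.mulVec x)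
      = |α 0| * (S * x 0 + s 0 * ∑ i ∈ E, α i * x i)^2
        + (|α 0| - S) * (S * (∑ i ∈ E, |α i| * x i ^ 2) - (∑ i ∈ E, α i * x i)^2) := by
    intro x
    have h := hQ x
    linear_combination S * h - (2 * S * x 0 * (∑ i ∈ E, α i * x i)) * hs1 0
      - (|α 0| * (∑ i ∈ E, α i * x i)^2) * hs2 0
  have hherm : M.IsHermitian := by
    rw [hM]
    refine Matrix.IsHermitian.add ?_ (Matrix.isHermitian_diagonal d)
    ext i j
    simp [Matrix.conjTranspose_apply, hA, mul_comm]
  rcases Nat.eq_zero_or_pos n with hn | hn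
  · -- n = 0 : M is the 1×1 zero matrix
    have hEempty : S = 0 := by
      rw [hS]
      apply Finset.sum_eq_zero
      intro i hi
      have : i = 0 := by rw [Fin.ext_iff, Fin.val_zero]; have := i.isLt; omega
      exact absurd this (Finset.mem_erase.mp (hE ▸ hi)).1
    have hM0 : M = 0 := by
      ext i j
      have hi : i = 0 := by rw [Fin.ext_iff, Fin.val_zero]; have := i.isLt; omega
      have hj : j = 0 := by rw [Fin.ext_iff, Fin.val_zero]; have := j.isLt; omega
      subst hi; subst hj
      rw [h11, hEempty, mul_zero, Matrix.zero_apply]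
    rw [hM0]
    exact ⟨Matrix.PosSemidef.zero, by rw [Matrix.rank_zero, hn]⟩
  · -- n ≥ 1
    have hSpos : 0 < S := by
      rw [hS]
      apply Finset.sum_pos (fun i _ => habs i)
      apply Finset.card_pos.mp
      have hcard : E.card = n := by
        rw [hE, Finset.card_erase_of_mem (Finset.mem_univ 0), Finset.card_univ,
          Fintype.card_fin]
        omega
      omega
    have hCS : ∀ x : Fin (n+1) → ℝ,
        0 ≤ S * (∑ i ∈ E, |α i| * x i ^ 2) - (∑ i ∈ E, α i * x i)^2 := by
      intro x
      have h2 : 0 ≤ ∑ i ∈ E, ∑ j ∈ E, |α i| * |α j| * (s i * x i - s j * x j)^2 :=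
        Finset.sum_nonneg fun i _ => Finset.sum_nonneg fun j _ => by positivity
      have h := hDS x
      linarith
    have hpos : ∀ x : Fin (n+1) → ℝ, 0 ≤ dotProduct x (M.mulVec x) := by
      intro x
      nlinarith [hQ' x, hCS x, sq_nonneg (S * x 0 + s 0 * ∑ i ∈ E, α i * x i),
        habs 0, hSpos, hdom]
    set w : Fin (n+1) → ℝ := fun i => if i = 0 then 1 else -(s 0 * s i) with hw
    have hw0 : w ≠ 0 := by
      intro h
      have := congrFun h 0
      simp [hw] at this
    have hdotw : ∑ j, α j * w j = s 0 * |α 0| - s 0 * S := by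
      rw [hsplit (fun j => α j * w j)]
      have h0 : α 0 * w 0 = s 0 * |α 0| := by
        simp only [hw, if_pos rfl, mul_one]
        exact (hs1 0).symm
      have hrest : ∑ j ∈ E, α j * w j = -(s 0 * S) := by
        have hterm : ∀ j ∈ E, α j * w j = -(s 0 * |α j|) := by
          intro j hj
          have hj0 : j ≠ 0 := (Finset.mem_erase.mp (hE ▸ hj)).1
          simp only [hw, if_neg hj0]
          linear_combination (s 0 * s j) * hs1 j - (s 0 * |α j|) * hs2 j
        rw [Finset.sum_congr rfl hterm, hS]
        rw [Finset.mul_sum]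
        rw [← Finset.sum_neg_distrib]
      rw [h0, hrest]; ring
    have hMw : M.mulVec w = 0 := by
      funext i
      rw [hM, Matrix.add_mulVec]
      have hAw : A.mulVec w i = α i * (s 0 * |α 0| - s 0 * S) := by
        simp only [Matrix.mulVec, dotProduct, hA, Matrix.of_apply]
        rw [← hdotw, Finset.mul_sum]
        apply Finset.sum_congr rfl; intros; ring
      have hDw : (Matrix.diagonal d).mulVec w i = d i * w i := Matrix.mulVec_diagonal d w i
      simp only [Pi.add_apply, hAw, hDw, Pi.zero_apply]
      by_cases h0 : i = 0
      · subst h0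
        simp only [hw, hd, if_pos rfl, mul_one]
        linear_combination (α 0 + S * s 0) * hs1 0 - (S * |α 0|) * hs2 0
      · simp only [hw, hd, if_neg h0]
        linear_combination (-(s 0) * (|α 0| - S)) * hs1 i
    have hker : LinearMap.ker M.mulVecLin = Submodule.span ℝ {w} := by
      apply le_antisymm
      · intro x hx
        have hx0 : M.mulVec x = 0 := by
          simpa [Matrix.mulVecLin_apply] using (LinearMap.mem_ker.mp hx)
        have hQ0 : dotProduct x (M.mulVec x) = 0 := by
          rw [hx0]; simp [dotProduct]
        have h := hQ' x
        rw [hQ0, mul_zero] at h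
        have hsq0 : (S * x 0 + s 0 * ∑ i ∈ E, α i * x i)^2 = 0 := by
          nlinarith [hCS x, sq_nonneg (S * x 0 + s 0 * ∑ i ∈ E, α i * x i), habs 0, hdom]
        have hB0 : S * (∑ i ∈ E, |α i| * x i ^ 2) - (∑ i ∈ E, α i * x i)^2 = 0 := by
          nlinarith [hCS x, sq_nonneg (S * x 0 + s 0 * ∑ i ∈ E, α i * x i), habs 0, hdom]
        have hA0 : S * x 0 + s 0 * ∑ i ∈ E, α i * x i = 0 := by
          exact sq_eq_zero_iff.mp hsq0
        have hDS0 : ∑ i ∈ E, ∑ j ∈ E, |α i| * |α j| * (s i * x i - s j * x j)^2 = 0 := by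
          rw [hDS x, hB0, mul_zero]
        have heq : ∀ i ∈ E, ∀ j ∈ E, s i * x i = s j * x j := by
          intro i hi j hj
          have hterm : |α i| * |α j| * (s i * x i - s j * x j)^2 = 0 := by
            have houter : ∀ k ∈ E, ∑ j ∈ E, |α k| * |α j| * (s k * x k - s j * x j)^2 = 0 := by
              intro k hk
              have := (Finset.sum_eq_zero_iff_of_nonneg
                (fun k _ => Finset.sum_nonneg fun j _ => by positivity)).mp hDS0
              exact this k hk
            have := (Finset.sum_eq_zero_iff_of_nonneg
              (fun j _ => by positivity)).mp (houter i hi)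
            exact this j hj
          have hne : |α i| * |α j| ≠ 0 := ne_of_gt (mul_pos (habs i) (habs j))
          have := mul_eq_zero.mp hterm
          rcases this with h' | h'
          · exact absurd h' hne
          · have h'' := sq_eq_zero_iff.mp h'
            linarith [h'']
        -- now show x = x 0 • w
        refine Submodule.mem_span_singleton.mpr ⟨x 0, ?_⟩
        funext i
        by_cases h0 : i = 0
        · subst h0; simp [hw]
        · have hiE : i ∈ E := Finset.mem_erase.mpr ⟨h0, Finset.mem_univ i⟩
          have hT : (∑ j ∈ E, α j * x j) = S * (s i * x i) := by
            rw [hS, Finset.sum_mul]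
            apply Finset.sum_congr rfl
            intro j hj
            have := heq j hj i hiE
            rw [← this]
            linear_combination (-(x j)) * hs1 j
          rw [hT] at hA0
          -- S * x 0 + s 0 * (S * (s i * x i)) = 0
          have hxi : x i = -(s 0 * s i) * x 0 := by
            have h4 : S * (x 0 + s 0 * (s i * x i)) = 0 := by linear_combination hA0
            have h3 := (mul_eq_zero.mp h4).resolve_left (ne_of_gt hSpos)
            linear_combination (s 0 * s i) * h3 - (x i * (s 0 * s 0)) * hs2 i
              - (x i) * hs2 0
          simp only [Pi.smul_apply, hw, if_neg h0, smul_eq_mul]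
          rw [hxi]; ring
      · rw [Submodule.span_le, Set.singleton_subset_iff]
        exact LinearMap.mem_ker.mpr (by simpa [Matrix.mulVecLin_apply] using hMw)
    constructor
    · exact Matrix.posSemidef_iff_dotProduct_mulVec.mpr ⟨hherm, fun x => by simpa using hpos x⟩
    · have hrank := LinearMap.finrank_range_add_finrank_ker M.mulVecLin
      rw [hker, finrank_span_singleton hw0] at hrank
      have hfr : Module.finrank ℝ (Fin (n+1) → ℝ) = n + 1 := by
        simp [Module.finrank_fin_fun]
      rw [hfr] at hrank
      have : M.rank = Module.finrank ℝ (LinearMap.range M.mulVecLin) := rfl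
      omega
end
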